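/- Assume f : ℝ → ℝ satisfies (f1)–(f6), and let λ > 0. If {u_n} is a sequence in the nodal Nehari set M such that the sequence {I(u_n)} is bounded, then {u_n} is bounded in H¹(ℝ³). -/

import Mathlib

open MeasureTheory Filter Set Real

noncomputable section

/-- Euclidean space ℝ³. -/
abbrev E3 : Type := EuclideanSpace ℝ (Fin 3)

/-- Membership in the Sobolev space H¹(ℝ³): `u` and its gradient are in L². -/
def MemH1 (u : E3 → ℝ) : Prop :=
  MemLp u 2 (volume : Measure E3) ∧
  MemLp (fun x => ‖gradient u x‖) 2 (volume : Measure E3)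

/-- `u` is a radial function. -/
def Radial (u : E3 → ℝ) : Prop := ∀ x y : E3, ‖x‖ = ‖y‖ → u x = u y

/-- The Newtonian potential φ_u, solving −Δφ = u² in ℝ³. -/
def phiP (u : E3 → ℝ) (x : E3) : ℝ := (1 / (4 * π)) * ∫ y, u y ^ 2 / ‖x - y‖

/-- F(t) = ∫₀ᵗ f(τ) dτ. -/
def Fprim (f : ℝ → ℝ) (t : ℝ) : ℝ := ∫ τ in (0:ℝ)..t, f τ

/-- The energy functional I. -/
def energy (f : ℝ → ℝ) (lam : ℝ) (u : E3 → ℝ) : ℝ :=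
  (1/2) * (∫ x, (‖gradient u x‖ ^ 2 + u x ^ 2)) +
  (lam/4) * (∫ x, phiP u x * u x ^ 2) -
  ∫ x, Fprim f (u x)

/-- The derivative I'(u)[v]. -/
def Iprime (f : ℝ → ℝ) (lam : ℝ) (u v : E3 → ℝ) : ℝ :=
  (∫ x, ((inner ℝ (gradient u x) (gradient v x) : ℝ) + u x * v x)) +
  lam * (∫ x, phiP u x * u x * v x) -
  ∫ x, f (u x) * v x

/-- Positive part u⁺ = max{u,0}. -/
def pPart (u : E3 → ℝ) : E3 → ℝ := fun x => max (u x) 0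

/-- Negative part u⁻ = min{u,0}. -/
def nPart (u : E3 → ℝ) : E3 → ℝ := fun x => min (u x) 0

/-- `u` vanishes almost everywhere (i.e. `u ≡ 0` as an element of H¹). -/
def AeZero (u : E3 → ℝ) : Prop := u =ᵐ[(volume : Measure E3)] (fun _ => (0:ℝ))

/-- The squared H¹ norm. -/
def H1normSq (u : E3 → ℝ) : ℝ := ∫ x, (‖gradient u x‖ ^ 2 + u x ^ 2)

/-- The Nehari set N. -/
def nehari (f : ℝ → ℝ) (lam : ℝ) : Set (E3 → ℝ) :=
  {u | MemH1 u ∧ Radial u ∧ ¬ AeZero u ∧ Iprime f lam u u = 0}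

/-- The nodal Nehari set M. -/
def nodalNehari (f : ℝ → ℝ) (lam : ℝ) : Set (E3 → ℝ) :=
  {u | MemH1 u ∧ Radial u ∧ Iprime f lam u u = 0 ∧ Iprime f lam u (pPart u) = 0 ∧
       ¬ AeZero (pPart u) ∧ ¬ AeZero (nPart u)}

/-- (f1): continuity. -/
def F1 (f : ℝ → ℝ) : Prop := Continuous f

/-- (f2): oddness. -/
def F2 (f : ℝ → ℝ) : Prop := ∀ t : ℝ, f (-t) = - f t

/-- (f3): lim_{t→0} f(t)/t = 0. -/
def F3 (f : ℝ → ℝ) : Prop := Tendsto (fun t => f t / t) (nhdsWithin 0 {(0:ℝ)}ᶜ) (nhds 0)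

/-- (f4): lim_{t→∞} f(t)/t³ = 1 and f(t)/t³ < 1 for t ≠ 0. -/
def F4 (f : ℝ → ℝ) : Prop :=
  Tendsto (fun t => f t / t ^ 3) atTop (nhds 1) ∧ ∀ t : ℝ, t ≠ 0 → f t / t ^ 3 < 1

/-- (f5): t ↦ f(t)/t³ strictly increasing on (0,∞). -/
def F5 (f : ℝ → ℝ) : Prop := StrictMonoOn (fun t => f t / t ^ 3) (Set.Ioi 0)

/-- (f6): f(t)t − 4F(t) → +∞ as t → ∞. -/
def F6 (f : ℝ → ℝ) : Prop := Tendsto (fun t => f t * t - 4 * Fprim f t) atTop atTop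

lemma f_zero' {f : ℝ → ℝ} (hf2 : F2 f) : f 0 = 0 := by
  have := hf2 0; simp at this; linarith

lemma Fprim_neg' {f : ℝ → ℝ} (hf2 : F2 f) (t : ℝ) : Fprim f (-t) = Fprim f t := by
  have h1 : (∫ x in (0:ℝ)..t, f (-x)) = ∫ x in (-t)..(-(0:ℝ)), f x :=
    intervalIntegral.integral_comp_neg f
  have h2 : (∫ x in (0:ℝ)..t, f (-x)) = ∫ x in (0:ℝ)..t, -(f x) := by
    apply intervalIntegral.integral_congr
    intro x _
    exact hf2 x
  rw [h2, intervalIntegral.integral_neg, neg_zero] at h1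
  have h3 : (∫ τ in (0:ℝ)..(-t), f τ) = -∫ τ in (-t)..(0:ℝ), f τ :=
    intervalIntegral.integral_symm (-t) 0
  unfold Fprim
  rw [h3, ← h1]; ring

lemma key_ineq' {f : ℝ → ℝ} (hf1 : F1 f) (hf2 : F2 f) (hf5 : F5 f) (t : ℝ) :
    4 * Fprim f t ≤ f t * t := by
  have main : ∀ s : ℝ, 0 ≤ s → 4 * Fprim f s ≤ f s * s := by
    intro s hs
    rcases eq_or_lt_of_le hs with h0 | hpos
    · simp [Fprim, ← h0, f_zero' hf2]
    · have hint1 : IntervalIntegrable f volume 0 s := hf1.intervalIntegrable _ _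
      have hint2 : IntervalIntegrable (fun τ => (f s / s ^ 3) * τ ^ 3) volume 0 s :=
        (Continuous.intervalIntegrable (by continuity) _ _)
      have hmono : ∀ τ ∈ Set.Icc (0:ℝ) s, f τ ≤ (f s / s ^ 3) * τ ^ 3 := by
        intro τ hτ
        rcases eq_or_lt_of_le hτ.1 with h0 | hτpos
        · simp [← h0, f_zero' hf2]
        · have hτ3 : (0:ℝ) < τ ^ 3 := by positivity
          have : f τ / τ ^ 3 ≤ f s / s ^ 3 := by
            rcases eq_or_lt_of_le hτ.2 with he | hlt
            · rw [he]
            · exact le_of_lt (hf5 hτpos (by exact hpos) hlt)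
          calc f τ = (f τ / τ ^ 3) * τ ^ 3 := by field_simp
            _ ≤ (f s / s ^ 3) * τ ^ 3 := by nlinarith
      have hle : Fprim f s ≤ ∫ τ in (0:ℝ)..s, (f s / s ^ 3) * τ ^ 3 :=
        intervalIntegral.integral_mono_on (le_of_lt hpos) hint1 hint2 hmono
      have hval : (∫ τ in (0:ℝ)..s, (f s / s ^ 3) * τ ^ 3) = f s * s / 4 := by
        rw [intervalIntegral.integral_const_mul, integral_pow]
        field_simp
        ring
      rw [hval] at hle; linarith
  rcases le_or_gt 0 t with h | h
  · exact main t h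
  · have := main (-t) (by linarith)
    rw [Fprim_neg' hf2, hf2] at this
    nlinarith

/-- a sequence in M with bounded energy is bounded in H¹. -/
theorem stmt17 (f : ℝ → ℝ) (hf1 : F1 f) (hf2 : F2 f) (hf3 : F3 f) (hf4 : F4 f)
    (hf5 : F5 f) (hf6 : F6 f) (lam : ℝ) (hlam : 0 < lam)
    (u : ℕ → E3 → ℝ) (hun : ∀ n : ℕ, u n ∈ nodalNehari f lam)
    (hbdd : ∃ C : ℝ, ∀ n : ℕ, |energy f lam (u n)| ≤ C) :
    ∃ C : ℝ, ∀ n : ℕ, H1normSq (u n) ≤ C := by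
  obtain ⟨C0, hC0⟩ := hbdd
  have hC0nn : 0 ≤ C0 := le_trans (abs_nonneg _) (hC0 0)
  refine ⟨4 * C0, fun n => ?_⟩
  obtain ⟨⟨hu2, hg2⟩, _, hIp, _, hpnz, _⟩ := hun n
  set v := u n with hv
  have hI1 : Integrable (fun x => ‖gradient v x‖ ^ 2) (volume : Measure E3) :=
    hg2.integrable_sq
  have hI2 : Integrable (fun x => v x ^ 2) (volume : Measure E3) := hu2.integrable_sq
  have hphi : ∀ x, 0 ≤ phiP v x := by
    intro x
    have hpi : (0:ℝ) ≤ 1 / (4 * π) := by positivity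
    exact mul_nonneg hpi (integral_nonneg fun y => by positivity)
  have hQ : (0:ℝ) ≤ ∫ x, phiP v x * v x ^ 2 :=
    integral_nonneg fun x => mul_nonneg (hphi x) (sq_nonneg _)
  have hfun : (fun x => (inner ℝ (gradient v x) (gradient v x) : ℝ) + v x * v x)
      = fun x => ‖gradient v x‖ ^ 2 + v x ^ 2 := by
    funext x
    rw [real_inner_self_eq_norm_sq]
    ring
  have hPQ : (fun x => phiP v x * v x * v x) = fun x => phiP v x * v x ^ 2 := by
    funext x; ring
  have hIp' : (∫ x, (‖gradient v x‖ ^ 2 + v x ^ 2)) +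
      lam * (∫ x, phiP v x * v x ^ 2) - (∫ x, f (v x) * v x) = 0 := by
    have h := hIp
    unfold Iprime at h
    rw [show (∫ x, ((inner ℝ (gradient v x) (gradient v x) : ℝ) + v x * v x))
        = ∫ x, (‖gradient v x‖ ^ 2 + v x ^ 2) from by rw [hfun],
      show (∫ x, phiP v x * v x * v x) = ∫ x, phiP v x * v x ^ 2 from by rw [hPQ]] at h
    exact h
  set H := ∫ x, (‖gradient v x‖ ^ 2 + v x ^ 2) with hH
  set P := ∫ x, phiP v x * v x ^ 2 with hPdef
  set B := ∫ x, f (v x) * v x with hB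
  set A := ∫ x, Fprim f (v x) with hA
  have hen : energy f lam v = (1/2) * H + (lam/4) * P - A := rfl
  have henle : (1/2) * H + (lam/4) * P - A ≤ C0 := by
    rw [← hen]; exact (abs_le.mp (hC0 n)).2
  have hgoal : H1normSq v = H := rfl
  rw [hgoal]
  have hlamP : (lam/4) * P = (lam * P) / 4 := by ring
  by_cases hBint : Integrable (fun x => f (v x) * v x) (volume : Measure E3)
  · by_cases hAint : Integrable (fun x => Fprim f (v x)) (volume : Measure E3)
    · -- both integrable: B - 4A ≥ 0
      have hsplit : B - 4 * A = ∫ x, (f (v x) * v x - 4 * Fprim f (v x)) := by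
        rw [integral_sub hBint (hAint.const_mul 4), MeasureTheory.integral_const_mul]
      have hBA : 0 ≤ B - 4 * A := by
        rw [hsplit]
        refine integral_nonneg fun x => ?_
        have := key_ineq' hf1 hf2 hf5 (v x)
        show (0:ℝ) ≤ f (v x) * v x - 4 * Fprim f (v x)
        linarith
      have hlamQ : 0 ≤ lam * P := mul_nonneg (le_of_lt hlam) hQ
      linarith
    · -- A is junk 0
      have hA0 : A = 0 := integral_undef hAint
      have hlamQ : 0 ≤ (lam/4) * P := mul_nonneg (by linarith) hQ
      linarith
  · -- B is junk 0: contradiction with pPart v ≠ 0 a.e.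
    exfalso
    have hB0 : B = 0 := integral_undef hBint
    have hHsplit : H = (∫ x, ‖gradient v x‖ ^ 2) + ∫ x, v x ^ 2 := by
      rw [hH, integral_add hI1 hI2]
    have hIg : (0:ℝ) ≤ ∫ x, ‖gradient v x‖ ^ 2 := integral_nonneg fun x => sq_nonneg _
    have hIu : (0:ℝ) ≤ ∫ x, v x ^ 2 := integral_nonneg fun x => sq_nonneg _
    have hlamQ : 0 ≤ lam * P := mul_nonneg (le_of_lt hlam) hQ
    have hIu0 : (∫ x, v x ^ 2) = 0 := by linarith
    have hv0 : (fun x => v x ^ 2) =ᵐ[(volume : Measure E3)] 0 :=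
      (integral_eq_zero_iff_of_nonneg (fun x => sq_nonneg _) hI2).mp hIu0
    apply hpnz
    filter_upwards [hv0] with x hx
    have : v x = 0 := by
      have hx' : v x ^ 2 = 0 := hx
      exact (pow_eq_zero_iff two_ne_zero).mp hx'
    simp [pPart, this]
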